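/- Let h ∈ L¹(ℝ⁴) with ∫|h| = K and let G : ℝ⁴ × ℝ⁴ → ℝ satisfy |G(x,y)| ≤ A + (1/(8π²)) log(1/|x-y|) for x ≠ y. If α·K < 32π², then for every bounded measurable set B ⊂ ℝ⁴ there is a constant C (depending on α, K, A, B) such that ∫_B exp(α ∫_{ℝ⁴} |G(x,y)| |h(y)| dy) dx ≤ C. -/

import Mathlib

open Real MeasureTheory Set
open scoped ENNReal

local notation "E4" => EuclideanSpace ℝ (Fin 4)

lemma finite_rpow_ball {β : ℝ} (hβ0 : 0 < β) (hβ4 : β < 4) :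
    ∫⁻ x : E4 in Metric.ball 0 1, (ENNReal.ofReal ‖x‖) ^ (-β) < ∞ := by
  have hdim : Module.finrank ℝ E4 = 4 := by simp [finrank_euclideanSpace]
  have hne : ∀ᵐ x : E4, x ≠ 0 := by
    rw [ae_iff]; simpa using measure_singleton (0 : E4)
  have hae : ∀ᵐ x : E4 ∂(volume.restrict (Metric.ball 0 1)),
      (ENNReal.ofReal ‖x‖) ^ (-β) = ENNReal.ofReal (‖x‖ ^ (-β)) := by
    filter_upwards [ae_restrict_of_ae hne] with x hx
    rw [ENNReal.ofReal_rpow_of_pos (norm_pos_iff.2 hx)]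
  rw [lintegral_congr_ae hae]
  set μ : Measure E4 := volume.restrict (Metric.ball 0 1) with hμ
  have hmble : AEMeasurable (fun x : E4 => ‖x‖ ^ (-β)) μ :=
    (measurable_norm.pow measurable_const).aemeasurable
  rw [lintegral_eq_lintegral_meas_le μ
    (Filter.Eventually.of_forall fun x => rpow_nonneg (norm_nonneg x) _) hmble]
  set v := volume (Metric.ball (0:E4) 1) with hv
  have hvfin : v < ∞ := measure_ball_lt_top
  have key : ∀ t ∈ Ioi (0:ℝ), μ {a : E4 | t ≤ ‖a‖ ^ (-β)} ≤
      min v (ENNReal.ofReal ((t ^ (-β⁻¹)) ^ 4) * v) := by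
    intro t ht
    rw [mem_Ioi] at ht
    refine le_min ?_ ?_
    · rw [hμ, Measure.restrict_apply₀' (by measurability)]
      exact measure_mono inter_subset_right
    · have hsub : {a : E4 | t ≤ ‖a‖ ^ (-β)} ⊆ Metric.closedBall 0 (t ^ (-β⁻¹)) := by
        intro a ha
        simp only [mem_setOf_eq] at ha
        rcases eq_or_ne a 0 with rfl | h0
        · rw [norm_zero, Real.zero_rpow (neg_ne_zero.2 hβ0.ne')] at ha
          exact absurd (lt_of_lt_of_le ht ha) (lt_irrefl 0)
        · have hna : 0 < ‖a‖ := norm_pos_iff.2 h0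
          rw [Metric.mem_closedBall, dist_zero_right]
          calc ‖a‖ = (‖a‖ ^ (-β)) ^ (-β⁻¹) := by
                rw [← Real.rpow_mul hna.le, neg_mul_neg, mul_inv_cancel₀ hβ0.ne',
                  Real.rpow_one]
            _ ≤ t ^ (-β⁻¹) := Real.rpow_le_rpow_of_nonpos ht ha
                (neg_nonpos.2 (inv_nonneg.2 hβ0.le))
      calc μ {a : E4 | t ≤ ‖a‖ ^ (-β)}
            = volume ({a : E4 | t ≤ ‖a‖ ^ (-β)} ∩ Metric.ball 0 1) := by
              rw [hμ, Measure.restrict_apply₀' (by measurability)]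
        _ ≤ volume (Metric.closedBall (0:E4) (t ^ (-β⁻¹))) :=
            measure_mono (inter_subset_left.trans hsub)
        _ = ENNReal.ofReal ((t ^ (-β⁻¹)) ^ 4) * v := by
            rw [Measure.addHaar_closedBall _ _ (by positivity), hdim]
  calc ∫⁻ t in Ioi (0:ℝ), μ {a : E4 | t ≤ ‖a‖ ^ (-β)}
      ≤ ∫⁻ t in Ioi (0:ℝ), min v (ENNReal.ofReal ((t ^ (-β⁻¹)) ^ 4) * v) :=
        setLIntegral_mono' measurableSet_Ioi key
    _ ≤ (∫⁻ t in Ioc (0:ℝ) 1, min v (ENNReal.ofReal ((t ^ (-β⁻¹)) ^ 4) * v))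
        + ∫⁻ t in Ioi (1:ℝ), min v (ENNReal.ofReal ((t ^ (-β⁻¹)) ^ 4) * v) := by
        rw [← lintegral_union measurableSet_Ioi (Ioc_disjoint_Ioi le_rfl)]
        exact lintegral_mono_set (by rw [Ioc_union_Ioi_eq_Ioi zero_le_one])
    _ < ∞ := by
        refine ENNReal.add_lt_top.2 ⟨?_, ?_⟩
        · calc (∫⁻ t in Ioc (0:ℝ) 1, min v (ENNReal.ofReal ((t ^ (-β⁻¹)) ^ 4) * v))
              ≤ ∫⁻ _ in Ioc (0:ℝ) 1, v := lintegral_mono fun t => min_le_left _ _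
            _ = v * volume (Ioc (0:ℝ) 1) := by rw [setLIntegral_const]
            _ < ∞ := by
                refine ENNReal.mul_lt_top hvfin ?_
                simp [Real.volume_Ioc]
        · have hint : IntegrableOn (fun t : ℝ => t ^ (-(4:ℝ)/β)) (Ioi 1) := by
            apply integrableOn_Ioi_rpow_of_lt _ zero_lt_one
            rw [div_lt_iff₀ hβ0]
            · linarith
          calc (∫⁻ t in Ioi (1:ℝ), min v (ENNReal.ofReal ((t ^ (-β⁻¹)) ^ 4) * v))
              ≤ ∫⁻ t in Ioi (1:ℝ), ENNReal.ofReal (t ^ (-(4:ℝ)/β)) * v := by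
                refine setLIntegral_mono' measurableSet_Ioi fun t ht => ?_
                rw [mem_Ioi] at ht
                refine le_trans (min_le_right _ _) ?_
                gcongr
                have h0t : (0:ℝ) ≤ t := (zero_lt_one.trans ht).le
                rw [← Real.rpow_natCast (t ^ (-β⁻¹)) 4, ← Real.rpow_mul h0t]
                refine le_of_eq ?_
                congr 1
                push_cast
                ring
            _ = (∫⁻ t in Ioi (1:ℝ), ENNReal.ofReal (t ^ (-(4:ℝ)/β))) * v :=
                lintegral_mul_const' _ _ hvfin.ne
            _ < ∞ := ENNReal.mul_lt_top hint.setLIntegral_lt_top hvfin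

lemma ofReal_integral_le {Y : Type*} [MeasurableSpace Y] {μ : Measure Y} {f : Y → ℝ}
    (hf : Integrable f μ) :
    ENNReal.ofReal (∫ y, f y ∂μ) ≤ ∫⁻ y, ENNReal.ofReal (f y) ∂μ := by
  calc ENNReal.ofReal (∫ y, f y ∂μ) ≤ ENNReal.ofReal (∫ y, max (f y) 0 ∂μ) := by
        apply ENNReal.ofReal_le_ofReal
        exact integral_mono hf (hf.pos_part) fun y => le_max_left _ _
    _ = ∫⁻ y, ENNReal.ofReal (max (f y) 0) ∂μ :=
        ofReal_integral_eq_lintegral_ofReal hf.pos_part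
          (Filter.Eventually.of_forall fun y => le_max_right _ _)
    _ = ∫⁻ y, ENNReal.ofReal (f y) ∂μ := by
        congr 1
        funext y
        rcases le_total (f y) 0 with h | h
        · rw [max_eq_right h, ENNReal.ofReal_zero, ENNReal.ofReal_of_nonpos h]
        · rw [max_eq_left h]

lemma jensen_exp {Y : Type*} [MeasurableSpace Y] {μ : Measure Y} {g w : Y → ℝ} {K : ℝ}
    (hw : ∀ y, 0 ≤ w y) (hwi : Integrable w μ) (hwK : ∫ y, w y ∂μ = K) (hK : 0 < K)
    (hgw : Integrable (fun y => g y * w y) μ) :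
    ENNReal.ofReal K * ENNReal.ofReal (exp ((1/K) * ∫ y, g y * w y ∂μ)) ≤
      ∫⁻ y, ENNReal.ofReal (exp (g y) * w y) ∂μ := by
  set c : ℝ := (1/K) * ∫ y, g y * w y ∂μ with hc
  have hptwise : ∀ y, exp c * ((1 + g y - c) * w y) ≤ exp (g y) * w y := by
    intro y
    have h1 : 1 + (g y - c) ≤ exp (g y - c) := by
      have := Real.add_one_le_exp (g y - c)
      linarith
    have h2 : exp c * (1 + g y - c) ≤ exp (g y) := by
      calc exp c * (1 + g y - c) = exp c * (1 + (g y - c)) := by rw [add_sub_assoc]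
        _ ≤ exp c * exp (g y - c) := mul_le_mul_of_nonneg_left h1 (exp_pos c).le
        _ = exp (g y) := by rw [← Real.exp_add]; congr 1; ring
    calc exp c * ((1 + g y - c) * w y) = (exp c * (1 + g y - c)) * w y := by ring
      _ ≤ exp (g y) * w y := mul_le_mul_of_nonneg_right h2 (hw y)
  have hint : Integrable (fun y => exp c * ((1 + g y - c) * w y)) μ := by
    refine Integrable.const_mul ?_ _
    have : (fun y => (1 + g y - c) * w y) = fun y => (w y + g y * w y) - c * w y := by
      funext y; ring
    rw [this]
    exact (hwi.add hgw).sub (hwi.const_mul c)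
  have hval : ∫ y, exp c * ((1 + g y - c) * w y) ∂μ = exp c * K := by
    rw [integral_const_mul]
    have : (fun y => (1 + g y - c) * w y) = fun y => (w y + g y * w y) - c * w y := by
      funext y; ring
    have hadd : Integrable (fun y => w y + g y * w y) μ := hwi.add hgw
    have hcw : Integrable (fun y => c * w y) μ := hwi.const_mul c
    rw [this, integral_sub hadd hcw, integral_add hwi hgw, integral_const_mul, hwK]
    have : ∫ y, g y * w y ∂μ = c * K := by
      rw [hc]; field_simp
    rw [this]
    ring_nf
  calc ENNReal.ofReal K * ENNReal.ofReal (exp c)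
      = ENNReal.ofReal (exp c * K) := by
        rw [mul_comm, ← ENNReal.ofReal_mul (exp_pos c).le]
    _ = ENNReal.ofReal (∫ y, exp c * ((1 + g y - c) * w y) ∂μ) := by rw [hval]
    _ ≤ ∫⁻ y, ENNReal.ofReal (exp c * ((1 + g y - c) * w y)) ∂μ := ofReal_integral_le hint
    _ ≤ ∫⁻ y, ENNReal.ofReal (exp (g y) * w y) ∂μ :=
        lintegral_mono fun y => ENNReal.ofReal_le_ofReal (hptwise y)

theorem exp_log_potential_integrable
    (h : EuclideanSpace ℝ (Fin 4) → ℝ) (hh : Integrable h)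
    (K : ℝ) (hK : ∫ y, |h y| = K)
    (G : EuclideanSpace ℝ (Fin 4) → EuclideanSpace ℝ (Fin 4) → ℝ)
    (A : ℝ)
    (hG : ∀ x y, x ≠ y → |G x y| ≤ A + (1 / (8 * π ^ 2)) * log (1 / ‖x - y‖))
    (α : ℝ) (hα : 0 < α) (hαK : α * K < 32 * π ^ 2)
    (B : Set (EuclideanSpace ℝ (Fin 4))) (hB : Bornology.IsBounded B)
    (hBm : MeasurableSet B) :
    ∃ C : ℝ, 0 < C ∧
      ∫⁻ x in B, ENNReal.ofReal (exp (α * ∫ y, |G x y| * |h y|)) ≤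
        ENNReal.ofReal C := by
  have hBfin : volume B < ∞ := hB.measure_lt_top
  by_cases hK0 : K = 0
  · -- degenerate case : h = 0 a.e.
    subst hK0
    have h0 : (fun y => |h y|) =ᵐ[volume] 0 :=
      (integral_eq_zero_iff_of_nonneg (fun y => abs_nonneg _) hh.abs).1 hK
    have hint0 : ∀ x : E4, (∫ y, |G x y| * |h y|) = 0 := by
      intro x
      have : (fun y => |G x y| * |h y|) =ᵐ[volume] 0 := by
        filter_upwards [h0] with y hy
        simp only [Pi.zero_apply] at hy ⊢
        rw [hy, mul_zero]
      rw [integral_congr_ae this]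
      simp
    refine ⟨(volume B).toReal + 1, by positivity, ?_⟩
    calc ∫⁻ x in B, ENNReal.ofReal (exp (α * ∫ y, |G x y| * |h y|))
        = ∫⁻ _ in B, 1 := by
          refine lintegral_congr fun x => ?_
          rw [hint0 x, mul_zero, Real.exp_zero, ENNReal.ofReal_one]
      _ = volume B := by simp
      _ = ENNReal.ofReal ((volume B).toReal) := (ENNReal.ofReal_toReal hBfin.ne).symm
      _ ≤ ENNReal.ofReal ((volume B).toReal + 1) :=
          ENNReal.ofReal_le_ofReal (by linarith)
  · -- main case
    have hKnn : 0 ≤ K := hK ▸ integral_nonneg fun y => abs_nonneg _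
    have hKpos : 0 < K := lt_of_le_of_ne hKnn (Ne.symm hK0)
    have hπ : (0:ℝ) < π := pi_pos
    set c8 : ℝ := 8 * π ^ 2 with hc8def
    have hc8 : 0 < c8 := by positivity
    set β : ℝ := α * K / c8 with hβdef
    have hβ0 : 0 < β := by positivity
    have hβ4 : β < 4 := by
      rw [hβdef, div_lt_iff₀ hc8]
      rw [hc8def]
      nlinarith
    set cA : ℝ≥0∞ := ENNReal.ofReal (exp (α * K * A)) with hcAdef
    have hcAne : cA ≠ ∞ := ENNReal.ofReal_ne_top
    set φ : E4 → ℝ≥0∞ := fun y => ENNReal.ofReal |h y| with hφdef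
    set M : E4 → E4 → ℝ≥0∞ :=
      fun x y => 1 + (ENNReal.ofReal ‖x - y‖) ^ (-β) with hMdef
    have hφint : ∫⁻ y, φ y = ENNReal.ofReal K := by
      rw [hφdef, ← hK]
      exact (ofReal_integral_eq_lintegral_ofReal hh.abs
        (Filter.Eventually.of_forall fun y => abs_nonneg _)).symm
    have haem : AEMeasurable φ volume := by
      have : AEMeasurable (fun y => |h y|) volume := by
        simpa [Real.norm_eq_abs] using hh.aemeasurable.norm
      exact this.ennreal_ofReal
    have hMmeas : Measurable (fun z : E4 × E4 => M z.1 z.2) := by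
      show Measurable (fun z : E4 × E4 => 1 + (ENNReal.ofReal ‖z.1 - z.2‖) ^ (-β))
      apply Measurable.const_add
      exact ((continuous_fst.sub continuous_snd).norm.measurable.ennreal_ofReal).pow
        measurable_const
    -- Step A : pointwise-in-x Jensen bound
    have hstep : ∀ x : E4,
        ENNReal.ofReal K * ENNReal.ofReal (exp (α * ∫ y, |G x y| * |h y|)) ≤
          ∫⁻ y, cA * M x y * φ y := by
      intro x
      have hB1 : ENNReal.ofReal K * ENNReal.ofReal (exp (α * ∫ y, |G x y| * |h y|)) ≤
          ∫⁻ y, ENNReal.ofReal (exp (α * K * |G x y|) * |h y|) := by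
        by_cases hint : Integrable (fun y => |G x y| * |h y|) volume
        · have hgw : Integrable (fun y => (α * K * |G x y|) * |h y|) volume := by
            have := hint.const_mul (α * K)
            simpa [mul_assoc] using this
          have hval : (1/K) * ∫ y, (α * K * |G x y|) * |h y| = α * ∫ y, |G x y| * |h y| := by
            have hre : (fun y => (α * K * |G x y|) * |h y|)
                = fun y => (α * K) * (|G x y| * |h y|) := by
              funext y; ring
            rw [hre, integral_const_mul]
            field_simp
          have := jensen_exp (g := fun y => α * K * |G x y|) (w := fun y => |h y|)
            (fun y => abs_nonneg _) hh.abs hK hKpos hgw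
          rwa [hval] at this
        · rw [integral_undef hint, mul_zero, Real.exp_zero, ENNReal.ofReal_one, mul_one]
          calc ENNReal.ofReal K = ∫⁻ y, φ y := hφint.symm
            _ ≤ ∫⁻ y, ENNReal.ofReal (exp (α * K * |G x y|) * |h y|) := by
                refine lintegral_mono fun y => ENNReal.ofReal_le_ofReal ?_
                have h1 : (1:ℝ) ≤ exp (α * K * |G x y|) :=
                  one_le_exp (by positivity)
                nlinarith [abs_nonneg (h y)]
      refine hB1.trans ?_
      have hxnull : ∀ᵐ y : E4, y ≠ x := by
        rw [ae_iff]; simpa using measure_singleton x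
      refine lintegral_mono_ae ?_
      filter_upwards [hxnull] with y hy
      have hxy : x ≠ y := Ne.symm hy
      have hr : (0:ℝ) < ‖x - y‖ := norm_pos_iff.2 (sub_ne_zero.2 hxy)
      have hGb := hG x y hxy
      have hexp : exp (α * K * |G x y|) ≤ exp (α * K * A) * ‖x - y‖ ^ (-β) := by
        have h2 : α * K * |G x y| ≤ α * K * A + β * log (1 / ‖x - y‖) := by
          have := mul_le_mul_of_nonneg_left hGb (by positivity : (0:ℝ) ≤ α * K)
          calc α * K * |G x y| ≤ α * K * (A + (1 / c8) * log (1 / ‖x - y‖)) := this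
            _ = α * K * A + β * log (1 / ‖x - y‖) := by
              rw [hβdef]; field_simp
        calc exp (α * K * |G x y|) ≤ exp (α * K * A + β * log (1 / ‖x - y‖)) :=
              exp_le_exp.2 h2
          _ = exp (α * K * A) * exp (β * log (1 / ‖x - y‖)) := by rw [Real.exp_add]
          _ = exp (α * K * A) * ‖x - y‖ ^ (-β) := by
              congr 1
              rw [Real.rpow_def_of_pos hr]
              congr 1
              rw [one_div, Real.log_inv]
              ring
      calc ENNReal.ofReal (exp (α * K * |G x y|) * |h y|)
          = ENNReal.ofReal (exp (α * K * |G x y|)) * φ y :=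
            ENNReal.ofReal_mul (exp_pos _).le
        _ ≤ (cA * M x y) * φ y := by
            refine mul_le_mul_left ?_ _
            calc ENNReal.ofReal (exp (α * K * |G x y|))
                ≤ ENNReal.ofReal (exp (α * K * A) * ‖x - y‖ ^ (-β)) :=
                  ENNReal.ofReal_le_ofReal hexp
              _ = cA * ENNReal.ofReal (‖x - y‖ ^ (-β)) :=
                  ENNReal.ofReal_mul (exp_pos _).le
              _ = cA * (ENNReal.ofReal ‖x - y‖) ^ (-β) := by
                  rw [ENNReal.ofReal_rpow_of_pos hr]
              _ ≤ cA * M x y := by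
                  refine mul_le_mul_right ?_ _
                  rw [hMdef]
                  exact le_add_self
        _ = cA * M x y * φ y := rfl
    -- I₀ : the local singular integral
    set I₀ : ℝ≥0∞ := ∫⁻ z : E4 in Metric.ball 0 1, (ENNReal.ofReal ‖z‖) ^ (-β) with hI₀def
    have hI₀fin : I₀ < ∞ := finite_rpow_ball hβ0 hβ4
    set D : ℝ≥0∞ := volume B + (I₀ + volume B) with hDdef
    have hDfin : D < ∞ := by
      rw [hDdef]
      exact ENNReal.add_lt_top.2 ⟨hBfin, ENNReal.add_lt_top.2 ⟨hI₀fin, hBfin⟩⟩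
    -- Step B : the inner x-integral of M is uniformly bounded
    have hMint : ∀ y : E4, ∫⁻ x in B, M x y ≤ D := by
      intro y
      have hsplit : ∫⁻ x in B, M x y
          = volume B + ∫⁻ x in B, (ENNReal.ofReal ‖x - y‖) ^ (-β) := by
        rw [hMdef]
        rw [lintegral_add_left measurable_const]
        simp
      rw [hsplit, hDdef]
      refine add_le_add_right ?_ _
      have hptw : ∀ x : E4, (ENNReal.ofReal ‖x - y‖) ^ (-β) ≤
          (Metric.ball y 1).indicator (fun x => (ENNReal.ofReal ‖x - y‖) ^ (-β)) x + 1 := by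
        intro x
        by_cases hx : x ∈ Metric.ball y 1
        · rw [indicator_of_mem hx]
          exact le_add_right le_rfl
        · rw [indicator_of_notMem hx, zero_add]
          have h1 : (1:ℝ) ≤ ‖x - y‖ := by
            rw [Metric.mem_ball, dist_eq_norm] at hx
            linarith [not_lt.1 hx]
          rw [ENNReal.rpow_neg]
          refine ENNReal.inv_le_one.2 (ENNReal.one_le_rpow ?_ hβ0)
          exact ENNReal.one_le_ofReal.2 h1
      calc ∫⁻ x in B, (ENNReal.ofReal ‖x - y‖) ^ (-β)
          ≤ ∫⁻ x in B, ((Metric.ball y 1).indicator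
              (fun x => (ENNReal.ofReal ‖x - y‖) ^ (-β)) x + 1) :=
            lintegral_mono fun x => hptw x
        _ = (∫⁻ x in B, (Metric.ball y 1).indicator
              (fun x => (ENNReal.ofReal ‖x - y‖) ^ (-β)) x) + volume B := by
            rw [lintegral_add_right _ measurable_const]
            simp
        _ ≤ (∫⁻ x, (Metric.ball y 1).indicator
              (fun x => (ENNReal.ofReal ‖x - y‖) ^ (-β)) x) + volume B := by
            exact add_le_add_left (setLIntegral_le_lintegral _ _) _
        _ = I₀ + volume B := by
            congr 1
            have hind : ∀ x : E4, (Metric.ball y 1).indicator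
                (fun x => (ENNReal.ofReal ‖x - y‖) ^ (-β)) x
                = (Metric.ball (0:E4) 1).indicator
                    (fun z => (ENNReal.ofReal ‖z‖) ^ (-β)) (x + -y) := by
              intro x
              by_cases hx : x ∈ Metric.ball y 1
              · have hx' : x + -y ∈ Metric.ball (0:E4) 1 := by
                  rw [Metric.mem_ball, dist_eq_norm] at hx ⊢
                  simpa [sub_eq_add_neg] using hx
                rw [indicator_of_mem hx, indicator_of_mem hx']
                simp [sub_eq_add_neg]
              · have hx' : x + -y ∉ Metric.ball (0:E4) 1 := by
                  rw [Metric.mem_ball, dist_eq_norm] at hx ⊢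
                  simpa [sub_eq_add_neg] using hx
                rw [indicator_of_notMem hx, indicator_of_notMem hx']
            calc ∫⁻ x, (Metric.ball y 1).indicator
                  (fun x => (ENNReal.ofReal ‖x - y‖) ^ (-β)) x
                = ∫⁻ x, (Metric.ball (0:E4) 1).indicator
                    (fun z => (ENNReal.ofReal ‖z‖) ^ (-β)) (x + -y) :=
                  lintegral_congr hind
              _ = ∫⁻ z, (Metric.ball (0:E4) 1).indicator
                    (fun z => (ENNReal.ofReal ‖z‖) ^ (-β)) z :=
                  lintegral_add_right_eq_self _ (-y)
              _ = I₀ := by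
                  rw [hI₀def, lintegral_indicator measurableSet_ball]
    -- Step C : put everything together with Tonelli
    have huncurry : AEMeasurable
        (Function.uncurry fun x y => cA * M x y * φ y)
        ((volume.restrict B).prod volume) := by
      have h1 : AEMeasurable (fun z : E4 × E4 => cA * M z.1 z.2)
          ((volume.restrict B).prod volume) :=
        (hMmeas.const_mul cA).aemeasurable
      have h2 : AEMeasurable (fun z : E4 × E4 => φ z.2)
          ((volume.restrict B).prod volume) := haem.comp_snd
      exact h1.mul h2
    have hmain : ENNReal.ofReal K *
        ∫⁻ x in B, ENNReal.ofReal (exp (α * ∫ y, |G x y| * |h y|)) ≤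
        ENNReal.ofReal K * (cA * D) := by
      calc ENNReal.ofReal K *
            ∫⁻ x in B, ENNReal.ofReal (exp (α * ∫ y, |G x y| * |h y|))
          = ∫⁻ x in B, ENNReal.ofReal K *
              ENNReal.ofReal (exp (α * ∫ y, |G x y| * |h y|)) :=
            (lintegral_const_mul' _ _ ENNReal.ofReal_ne_top).symm
        _ ≤ ∫⁻ x in B, ∫⁻ y, cA * M x y * φ y := lintegral_mono fun x => hstep x
        _ = ∫⁻ y, ∫⁻ x in B, cA * M x y * φ y := lintegral_lintegral_swap huncurry
        _ ≤ ∫⁻ y, cA * φ y * D := by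
            refine lintegral_mono fun y => ?_
            calc ∫⁻ x in B, cA * M x y * φ y
                = ∫⁻ x in B, (cA * φ y) * M x y := by
                  refine lintegral_congr fun x => ?_
                  ring
              _ = (cA * φ y) * ∫⁻ x in B, M x y :=
                  lintegral_const_mul' _ _
                    (ENNReal.mul_ne_top hcAne ENNReal.ofReal_ne_top)
              _ ≤ (cA * φ y) * D := mul_le_mul_right (hMint y) _
              _ = cA * φ y * D := rfl
        _ = (∫⁻ y, cA * φ y) * D := lintegral_mul_const' _ _ hDfin.ne
        _ = cA * ENNReal.ofReal K * D := by
            rw [lintegral_const_mul' _ _ hcAne, hφint]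
        _ = ENNReal.ofReal K * (cA * D) := by ring
    have hKne : ENNReal.ofReal K ≠ 0 := by
      simp [ENNReal.ofReal_eq_zero, not_le, hKpos]
    have hfinal : ∫⁻ x in B, ENNReal.ofReal (exp (α * ∫ y, |G x y| * |h y|)) ≤ cA * D :=
      (ENNReal.mul_le_mul_iff_right hKne ENNReal.ofReal_ne_top).1 hmain
    refine ⟨(cA * D).toReal + 1, by positivity, ?_⟩
    have hfin : cA * D ≠ ∞ := ENNReal.mul_ne_top hcAne hDfin.ne
    refine hfinal.trans ?_
    calc cA * D = ENNReal.ofReal ((cA * D).toReal) := (ENNReal.ofReal_toReal hfin).symm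
      _ ≤ ENNReal.ofReal ((cA * D).toReal + 1) := ENNReal.ofReal_le_ofReal (by linarith)
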